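/- arXiv:2402.05846 — 2 statements merged into one kernel-verified Lean document; each statement's English description precedes it below -/
import Mathlib

section
/- Let S be a semigroup and ρ a congruence on S, and let K be any one of Green's relations L, R, J. Then: (1) H_K(S) ≥ H_K(S/ρ); (2) if ≤_K ∩ ρ = K ∩ ρ (as binary relations on S, where ≤_K and K are taken in S), then H_K(S) = H_K(S/ρ); (3) if S is left stable and ≤_L ∩ ρ ⊆ J, then H_L(S) = H_L(S/ρ); (4) if S is right stable and ≤_R ∩ ρ ⊆ J, then H_R(S) = H_R(S/ρ). -/
namespace GreenHeights

universe u

section Defs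

variable {S : Type u} [Semigroup S]

/-- Green's preorder `≤_L`: `a ≤_L b` iff `a = s * b` for some `s ∈ S¹`
(i.e. `a = b` or `a = s * b` for some `s ∈ S`). -/
def leL (a b : S) : Prop := a = b ∨ ∃ s : S, a = s * b

/-- Green's preorder `≤_R`: `a ≤_R b` iff `a = b * s` for some `s ∈ S¹`. -/
def leR (a b : S) : Prop := a = b ∨ ∃ s : S, a = b * s

/-- Green's preorder `≤_J`: `a ≤_J b` iff `a = s * b * t` for some `s, t ∈ S¹`. -/
def leJ (a b : S) : Prop :=
  a = b ∨ (∃ s : S, a = s * b) ∨ (∃ t : S, a = b * t) ∨ ∃ s t : S, a = s * b * t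

/-- Green's preorder `≤_H`. -/
def leH (a b : S) : Prop := leL a b ∧ leR a b

/-- Green's relation `L`. -/
def eqvL (a b : S) : Prop := leL a b ∧ leL b a

/-- Green's relation `R`. -/
def eqvR (a b : S) : Prop := leR a b ∧ leR b a

/-- Green's relation `J`. -/
def eqvJ (a b : S) : Prop := leJ a b ∧ leJ b a

/-- Green's relation `H`. -/
def eqvH (a b : S) : Prop := leH a b ∧ leH b a

/-- `a <_L b`. -/
def ltL (a b : S) : Prop := leL a b ∧ ¬ leL b a

/-- `a <_R b`. -/
def ltR (a b : S) : Prop := leR a b ∧ ¬ leR b a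

/-- `a <_J b`. -/
def ltJ (a b : S) : Prop := leJ a b ∧ ¬ leJ b a

/-- `a <_H b`. -/
def ltH (a b : S) : Prop := leH a b ∧ ¬ leH b a

end Defs

/-- The set of lengths of strictly decreasing chains with respect to a relation `lt`:
`m` is a chain length if there is a sequence `c 0 >' c 1 >' … >' c (m-1)`. -/
def chainLengths {T : Type u} (lt : T → T → Prop) : Set ℕ :=
  {m | ∃ c : Fin m → T, ∀ i j : Fin m, i < j → lt (c j) (c i)}

/-- The height: the supremum, in `ℕ∞`, of the lengths of strictly decreasing chains. -/
noncomputable def heightOf {T : Type u} (lt : T → T → Prop) : ℕ∞ :=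
  ⨆ m ∈ chainLengths lt, (m : ℕ∞)

/-- The `L`-height of a semigroup. -/
noncomputable def HL (S : Type u) [Semigroup S] : ℕ∞ := heightOf (ltL (S := S))

/-- The `R`-height of a semigroup. -/
noncomputable def HR (S : Type u) [Semigroup S] : ℕ∞ := heightOf (ltR (S := S))

/-- The `J`-height of a semigroup. -/
noncomputable def HJ (S : Type u) [Semigroup S] : ℕ∞ := heightOf (ltJ (S := S))

/-- The `H`-height of a semigroup. -/
noncomputable def HH (S : Type u) [Semigroup S] : ℕ∞ := heightOf (ltH (S := S))

/-- `S` is left stable if `a ≤_L b` and `a J b` imply `a L b`. -/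
def LeftStable (S : Type u) [Semigroup S] : Prop :=
  ∀ a b : S, leL a b → eqvJ a b → eqvL a b

/-- `S` is right stable if `a ≤_R b` and `a J b` imply `a R b`. -/
def RightStable (S : Type u) [Semigroup S] : Prop :=
  ∀ a b : S, leR a b → eqvJ a b → eqvR a b

/-- `S` is stable if it is both left and right stable. -/
def Stable (S : Type u) [Semigroup S] : Prop := LeftStable S ∧ RightStable S

section Aux

variable {S : Type u} [Semigroup S]

lemma leL_trans {a b d : S} (h1 : leL a b) (h2 : leL b d) : leL a d := by
  rcases h1 with rfl | ⟨s, rfl⟩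
  · exact h2
  · rcases h2 with rfl | ⟨t, rfl⟩
    · exact Or.inr ⟨s, rfl⟩
    · exact Or.inr ⟨s * t, (mul_assoc s t d).symm⟩

lemma leR_trans {a b d : S} (h1 : leR a b) (h2 : leR b d) : leR a d := by
  rcases h1 with rfl | ⟨s, rfl⟩
  · exact h2
  · rcases h2 with rfl | ⟨t, rfl⟩
    · exact Or.inr ⟨s, rfl⟩
    · exact Or.inr ⟨t * s, mul_assoc d t s⟩

lemma leJ_iff {a b : S} : leJ a b ↔ ∃ s t : WithOne S, (a : WithOne S) = s * ↑b * t := by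
  constructor
  · rintro (rfl | ⟨s, rfl⟩ | ⟨t, rfl⟩ | ⟨s, t, rfl⟩)
    · exact ⟨1, 1, by simp⟩
    · exact ⟨s, 1, by simp⟩
    · exact ⟨1, t, by simp⟩
    · exact ⟨s, t, by simp⟩
  · rintro ⟨s, t, h⟩
    induction s using WithOne.recOneCoe <;> induction t using WithOne.recOneCoe <;>
      simp only [one_mul, mul_one, ← WithOne.coe_mul, WithOne.coe_inj] at h
    · exact Or.inl h
    · exact Or.inr (Or.inr (Or.inl ⟨_, h⟩))
    · exact Or.inr (Or.inl ⟨_, h⟩)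
    · exact Or.inr (Or.inr (Or.inr ⟨_, _, h⟩))

lemma leJ_trans {a b d : S} (h1 : leJ a b) (h2 : leJ b d) : leJ a d := by
  rw [leJ_iff] at h1 h2 ⊢
  obtain ⟨s, t, h1⟩ := h1
  obtain ⟨u, v, h2⟩ := h2
  exact ⟨s * u, v * t, by rw [h1, h2]; simp [mul_assoc]⟩

end Aux

section Transfer

variable {T Q : Type u} (φ : T → Q) (le : T → T → Prop) (le' : Q → Q → Prop)

/-- Lifting a (not necessarily strict) chain from the quotient back to representatives. -/
lemma exists_lift_chain
    (hsurj : Function.Surjective φ)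
    (hlift : ∀ (a' : Q) (b : T), le' a' (φ b) → ∃ a, φ a = a' ∧ le a b)
    (htrans : ∀ {x y z : T}, le x y → le y z → le x z) :
    ∀ (m : ℕ) (cq : Fin m → Q), (∀ i j : Fin m, i < j → le' (cq j) (cq i)) →
      ∃ b : Fin m → T, (∀ i, φ (b i) = cq i) ∧ ∀ i j : Fin m, i < j → le (b j) (b i) := by
  intro m
  induction m with
  | zero => exact fun cq _ => ⟨fun i => i.elim0, fun i => i.elim0, fun i => i.elim0⟩
  | succ m ih =>
    intro cq hcq
    cases m with
    | zero =>
      obtain ⟨x, hx⟩ := hsurj (cq 0)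
      refine ⟨fun _ => x, ?_, ?_⟩
      · intro i
        have : i = 0 := Fin.ext (by omega)
        rw [this]; exact hx
      · intro i j hij
        have : i = j := Fin.ext (by omega)
        exact absurd (this ▸ hij) (lt_irrefl _)
    | succ k =>
      obtain ⟨b, hb1, hb2⟩ := ih (fun i => cq i.castSucc)
        (fun i j hij => hcq i.castSucc j.castSucc (by simpa using hij))
      have hlast : le' (cq (Fin.last (k + 1))) (φ (b (Fin.last k))) := by
        rw [hb1]
        exact hcq (Fin.last k).castSucc (Fin.last (k + 1)) (Fin.castSucc_lt_last _)
      obtain ⟨x, hx1, hx2⟩ := hlift _ _ hlast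
      refine ⟨Fin.snoc b x, ?_, ?_⟩
      · intro i
        refine Fin.lastCases ?_ ?_ i
        · rw [Fin.snoc_last]; exact hx1
        · intro i'
          rw [Fin.snoc_castSucc]; exact hb1 i'
      · intro i j hij
        revert hij
        refine Fin.lastCases ?_ (fun j' => ?_) j <;> intro hij'
        · -- j = last
          obtain ⟨i', rfl⟩ := Fin.exists_castSucc_eq.mpr (ne_of_lt hij')
          rw [Fin.snoc_last, Fin.snoc_castSucc]
          rcases eq_or_lt_of_le (Fin.le_last i') with h | h
          · rw [h]; exact hx2
          · exact htrans hx2 (hb2 i' (Fin.last k) h)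
        · -- j = castSucc j'
          obtain ⟨i', rfl⟩ := Fin.exists_castSucc_eq.mpr
            (ne_of_lt (lt_of_lt_of_le hij' (Fin.le_last _)))
          rw [Fin.snoc_castSucc, Fin.snoc_castSucc]
          exact hb2 i' j' (by simpa using hij')

lemma heightOf_mono {A B : Type u} {lt : A → A → Prop} {lt' : B → B → Prop}
    (h : chainLengths lt ⊆ chainLengths lt') : heightOf lt ≤ heightOf lt' := by
  refine iSup₂_le fun m hm => ?_
  exact le_iSup₂ (f := fun (m : ℕ) (_ : m ∈ chainLengths lt') => (m : ℕ∞)) m (h hm)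

/-- Part (1), generic: the height of the quotient is at most the height of `T`. -/
lemma height_lift
    (hsurj : Function.Surjective φ)
    (hmono : ∀ a b : T, le a b → le' (φ a) (φ b))
    (hlift : ∀ (a' : Q) (b : T), le' a' (φ b) → ∃ a, φ a = a' ∧ le a b)
    (htrans : ∀ {x y z : T}, le x y → le y z → le x z) :
    heightOf (fun x y : Q => le' x y ∧ ¬ le' y x) ≤
      heightOf (fun x y : T => le x y ∧ ¬ le y x) := by
  refine heightOf_mono ?_
  rintro m ⟨cq, hcq⟩
  obtain ⟨b, hb1, hb2⟩ := exists_lift_chain φ le le' hsurj hlift @htrans m cq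
    (fun i j hij => (hcq i j hij).1)
  refine ⟨b, fun i j hij => ⟨hb2 i j hij, fun hcon => ?_⟩⟩
  have := hmono _ _ hcon
  rw [hb1, hb1] at this
  exact (hcq i j hij).2 this

/-- Parts (2)–(4), generic: the descent direction. -/
lemma height_descend
    (hmono : ∀ a b : T, le a b → le' (φ a) (φ b))
    (hlift : ∀ (a' : Q) (b : T), le' a' (φ b) → ∃ a, φ a = a' ∧ le a b)
    (htrans : ∀ {x y z : T}, le x y → le y z → le x z)
    (h2 : ∀ x y : T, le x y → φ x = φ y → le y x) :
    heightOf (fun x y : T => le x y ∧ ¬ le y x) ≤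
      heightOf (fun x y : Q => le' x y ∧ ¬ le' y x) := by
  refine heightOf_mono ?_
  rintro m ⟨a, ha⟩
  refine ⟨fun i => φ (a i), fun i j hij => ⟨hmono _ _ (ha i j hij).1, fun hcon => ?_⟩⟩
  obtain ⟨x, hx1, hx2⟩ := hlift _ _ hcon
  have hxi : le x (a i) := htrans hx2 (ha i j hij).1
  have : le (a i) x := h2 x (a i) hxi hx1
  exact (ha i j hij).2 (htrans this hx2)

end Transfer

/-- Heights of quotients by a congruence `c` (Mathlib's `Con`):
(1) each of the `L`-, `R`-, `J`-heights of `S/c` is at most that of `S`;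
(2) if `≤_K ∩ c = K ∩ c` then the `K`-heights agree, for `K ∈ {L, R, J}`;
(3) if `S` is left stable and `≤_L ∩ c ⊆ J` then the `L`-heights agree;
(4) dually for right stability. -/
theorem heights_of_quotients (S : Type u) [Semigroup S] (c : Con S) :
    (HL c.Quotient ≤ HL S ∧ HR c.Quotient ≤ HR S ∧ HJ c.Quotient ≤ HJ S) ∧
    ((∀ a b : S, (leL a b ∧ c a b) ↔ (eqvL a b ∧ c a b)) → HL S = HL c.Quotient) ∧
    ((∀ a b : S, (leR a b ∧ c a b) ↔ (eqvR a b ∧ c a b)) → HR S = HR c.Quotient) ∧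
    ((∀ a b : S, (leJ a b ∧ c a b) ↔ (eqvJ a b ∧ c a b)) → HJ S = HJ c.Quotient) ∧
    (LeftStable S → (∀ a b : S, leL a b → c a b → eqvJ a b) → HL S = HL c.Quotient) ∧
    (RightStable S → (∀ a b : S, leR a b → c a b → eqvJ a b) → HR S = HR c.Quotient) := by
  have hsurj : Function.Surjective (fun a : S => (↑a : c.Quotient)) :=
    fun q => Con.induction_on q fun a => ⟨a, rfl⟩
  -- L data
  have hmonoL : ∀ a b : S, leL a b → leL (↑a : c.Quotient) ↑b := by
    rintro a b (rfl | ⟨s, rfl⟩)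
    · exact Or.inl rfl
    · exact Or.inr ⟨↑s, Con.coe_mul s b⟩
  have hliftL : ∀ (a' : c.Quotient) (b : S), leL a' ↑b → ∃ a : S, ↑a = a' ∧ leL a b := by
    rintro a' b (h | ⟨s', h⟩)
    · exact ⟨b, h.symm, Or.inl rfl⟩
    · obtain ⟨s, rfl⟩ := hsurj s'
      exact ⟨s * b, by rw [h]; exact Con.coe_mul s b, Or.inr ⟨s, rfl⟩⟩
  -- R data
  have hmonoR : ∀ a b : S, leR a b → leR (↑a : c.Quotient) ↑b := by
    rintro a b (rfl | ⟨s, rfl⟩)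
    · exact Or.inl rfl
    · exact Or.inr ⟨↑s, Con.coe_mul b s⟩
  have hliftR : ∀ (a' : c.Quotient) (b : S), leR a' ↑b → ∃ a : S, ↑a = a' ∧ leR a b := by
    rintro a' b (h | ⟨s', h⟩)
    · exact ⟨b, h.symm, Or.inl rfl⟩
    · obtain ⟨s, rfl⟩ := hsurj s'
      exact ⟨b * s, by rw [h]; exact Con.coe_mul b s, Or.inr ⟨s, rfl⟩⟩
  -- J data
  have hmonoJ : ∀ a b : S, leJ a b → leJ (↑a : c.Quotient) ↑b := by
    rintro a b (rfl | ⟨s, rfl⟩ | ⟨t, rfl⟩ | ⟨s, t, rfl⟩)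
    · exact Or.inl rfl
    · exact Or.inr (Or.inl ⟨↑s, Con.coe_mul s b⟩)
    · exact Or.inr (Or.inr (Or.inl ⟨↑t, Con.coe_mul b t⟩))
    · exact Or.inr (Or.inr (Or.inr ⟨↑s, ↑t, by rw [Con.coe_mul, Con.coe_mul]⟩))
  have hliftJ : ∀ (a' : c.Quotient) (b : S), leJ a' ↑b → ∃ a : S, ↑a = a' ∧ leJ a b := by
    rintro a' b (h | ⟨s', h⟩ | ⟨t', h⟩ | ⟨s', t', h⟩)
    · exact ⟨b, h.symm, Or.inl rfl⟩
    · obtain ⟨s, rfl⟩ := hsurj s'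
      exact ⟨s * b, by rw [h]; exact Con.coe_mul s b, Or.inr (Or.inl ⟨s, rfl⟩)⟩
    · obtain ⟨t, rfl⟩ := hsurj t'
      exact ⟨b * t, by rw [h]; exact Con.coe_mul b t, Or.inr (Or.inr (Or.inl ⟨t, rfl⟩))⟩
    · obtain ⟨s, rfl⟩ := hsurj s'
      obtain ⟨t, rfl⟩ := hsurj t'
      exact ⟨s * b * t, by rw [h, Con.coe_mul, Con.coe_mul],
        Or.inr (Or.inr (Or.inr ⟨s, t, rfl⟩))⟩
  -- part (1)
  have p1L : HL c.Quotient ≤ HL S :=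
    height_lift _ leL leL hsurj hmonoL hliftL (fun h1 h2 => leL_trans h1 h2)
  have p1R : HR c.Quotient ≤ HR S :=
    height_lift _ leR leR hsurj hmonoR hliftR (fun h1 h2 => leR_trans h1 h2)
  have p1J : HJ c.Quotient ≤ HJ S :=
    height_lift _ leJ leJ hsurj hmonoJ hliftJ (fun h1 h2 => leJ_trans h1 h2)
  -- descent, given the "ρ-compatibility" condition
  have pdL : (∀ x y : S, leL x y → (↑x : c.Quotient) = ↑y → leL y x) → HL S = HL c.Quotient :=
    fun h2 => le_antisymm
      (height_descend _ leL leL hmonoL hliftL (fun h1 h2 => leL_trans h1 h2) h2) p1L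
  have pdR : (∀ x y : S, leR x y → (↑x : c.Quotient) = ↑y → leR y x) → HR S = HR c.Quotient :=
    fun h2 => le_antisymm
      (height_descend _ leR leR hmonoR hliftR (fun h1 h2 => leR_trans h1 h2) h2) p1R
  have pdJ : (∀ x y : S, leJ x y → (↑x : c.Quotient) = ↑y → leJ y x) → HJ S = HJ c.Quotient :=
    fun h2 => le_antisymm
      (height_descend _ leJ leJ hmonoJ hliftJ (fun h1 h2 => leJ_trans h1 h2) h2) p1J
  refine ⟨⟨p1L, p1R, p1J⟩, ?_, ?_, ?_, ?_, ?_⟩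
  · exact fun h => pdL fun x y hxy heq => ((h x y).mp ⟨hxy, c.eq.mp heq⟩).1.2
  · exact fun h => pdR fun x y hxy heq => ((h x y).mp ⟨hxy, c.eq.mp heq⟩).1.2
  · exact fun h => pdJ fun x y hxy heq => ((h x y).mp ⟨hxy, c.eq.mp heq⟩).1.2
  · exact fun hst h => pdL fun x y hxy heq => (hst x y hxy (h x y hxy (c.eq.mp heq))).2
  · exact fun hst h => pdR fun x y hxy heq => (hst x y hxy (h x y hxy (c.eq.mp heq))).2

end GreenHeights
end

section
/- Let S be a semigroup with zero 0, with S ≠ {0}, and let I be the left socle of S. Then H_L(S) is finite if and only if H_L(S/I) is finite, in which case H_L(S) = H_L(S/I) + 1. -/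
namespace GreenHeights

universe u

/-- A (two-sided) ideal of a semigroup, bundled. -/
structure SemigroupIdeal (S : Type u) [Semigroup S] where
  carrier : Set S
  nonempty : carrier.Nonempty
  mul_mem_left : ∀ (s : S) {a : S}, a ∈ carrier → s * a ∈ carrier
  mul_mem_right : ∀ (s : S) {a : S}, a ∈ carrier → a * s ∈ carrier

/-- The Rees quotient `S/I`: its carrier is `(S \ I) ∪ {0}`, where `none` plays the role
of the new zero `0`. -/
abbrev ReesQuotient {S : Type u} [Semigroup S] (I : SemigroupIdeal S) : Type u :=
  Option {x : S // x ∉ I.carrier}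

namespace ReesQuotient

variable {S : Type u} [Semigroup S] {I : SemigroupIdeal S}

open Classical in
/-- The natural projection `S → S/I`. -/
noncomputable def mk (I : SemigroupIdeal S) (x : S) : ReesQuotient I :=
  if h : x ∈ I.carrier then none else some ⟨x, h⟩

/-- Multiplication in the Rees quotient: `a · b = ab` if `a, b, ab ∈ S \ I`,
and `a · b = 0` otherwise. -/
noncomputable def rmul (I : SemigroupIdeal S) :
    ReesQuotient I → ReesQuotient I → ReesQuotient I
  | some x, some y => mk I (x.1 * y.1)
  | _, _ => none

noncomputable instance : Mul (ReesQuotient I) := ⟨rmul I⟩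

theorem none_mul (b : ReesQuotient I) : (none : ReesQuotient I) * b = none := by
  cases b <;> rfl

theorem mul_none (a : ReesQuotient I) : a * (none : ReesQuotient I) = none := by
  cases a <;> rfl

theorem mk_mul_some (a : S) (y : {x : S // x ∉ I.carrier}) :
    mk I a * (some y : ReesQuotient I) = mk I (a * y.1) := by
  by_cases h : a ∈ I.carrier
  · have h2 : a * y.1 ∈ I.carrier := I.mul_mem_right y.1 h
    simp only [mk, dif_pos h, dif_pos h2]
    exact none_mul _
  · simp only [mk, dif_neg h]
    rfl

theorem some_mul_mk (x : {x : S // x ∉ I.carrier}) (b : S) :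
    (some x : ReesQuotient I) * mk I b = mk I (x.1 * b) := by
  by_cases h : b ∈ I.carrier
  · have h2 : x.1 * b ∈ I.carrier := I.mul_mem_left x.1 h
    simp only [mk, dif_pos h, dif_pos h2]
    exact mul_none _
  · simp only [mk, dif_neg h]
    rfl

noncomputable instance : Semigroup (ReesQuotient I) where
  mul_assoc a b c := by
    rcases a with _ | x
    · rw [none_mul, none_mul, none_mul]
    rcases b with _ | y
    · rw [mul_none, none_mul, mul_none]
    rcases c with _ | z
    · rw [mul_none, mul_none, mul_none]
    · show mk I (x.1 * y.1) * some z = some x * mk I (y.1 * z.1)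
      rw [mk_mul_some, some_mul_mk, mul_assoc]

end ReesQuotient

/-- The left socle of a semigroup with zero `z`: the union of `{z}` and all `0`-minimal
`L`-classes. -/
def leftSocle {S : Type u} [Semigroup S] (z : S) : Set S :=
  {a : S | a = z ∨ ∀ b : S, ltL b a → b = z}


section AuxProof

variable {S : Type u} [Semigroup S]

theorem leL_refl' (a : S) : leL a a := Or.inl rfl

theorem leL_trans' : ∀ {a b c : S}, leL a b → leL b c → leL a c := by
  rintro a b c (rfl | ⟨s, rfl⟩) (rfl | ⟨t, rfl⟩)
  · exact Or.inl rfl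
  · exact Or.inr ⟨t, rfl⟩
  · exact Or.inr ⟨s, rfl⟩
  · exact Or.inr ⟨s * t, (mul_assoc s t _).symm⟩

theorem ltL_trans' : ∀ {a b c : S}, ltL a b → ltL b c → ltL a c :=
  fun hab hbc => ⟨leL_trans' hab.1 hbc.1, fun h => hbc.2 (leL_trans' h hab.1)⟩

variable {z : S}

theorem leL_z' (hz : ∀ s : S, z * s = z ∧ s * z = z) (b : S) : leL z b :=
  Or.inr ⟨z, ((hz b).1).symm⟩

theorem eq_z_of_leL' (hz : ∀ s : S, z * s = z ∧ s * z = z) {b : S} (h : leL b z) : b = z := by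
  rcases h with rfl | ⟨s, rfl⟩
  · rfl
  · exact (hz s).2

theorem ltL_z' (hz : ∀ s : S, z * s = z ∧ s * z = z) {b : S} (hb : b ≠ z) : ltL z b :=
  ⟨leL_z' hz b, fun h => hb (eq_z_of_leL' hz h)⟩

variable {I : SemigroupIdeal S}

theorem none_leL' (b : ReesQuotient I) : leL (none : ReesQuotient I) b :=
  Or.inr ⟨none, (ReesQuotient.none_mul b).symm⟩

theorem eq_none_of_leL' {a : ReesQuotient I} (h : leL a (none : ReesQuotient I)) : a = none := by
  rcases h with rfl | ⟨s, rfl⟩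
  · rfl
  · exact ReesQuotient.mul_none s

theorem ltL_none' {a : ReesQuotient I} (ha : a ≠ none) : ltL (none : ReesQuotient I) a :=
  ⟨none_leL' a, fun h => ha (eq_none_of_leL' h)⟩

theorem quot_leL_iff (x y : {a : S // a ∉ I.carrier}) :
    leL (some x : ReesQuotient I) (some y) ↔ leL x.1 y.1 := by
  constructor
  · rintro (h | ⟨s, hs⟩)
    · exact Or.inl (congrArg Subtype.val (Option.some_injective _ h))
    · rcases s with _ | t
      · rw [ReesQuotient.none_mul] at hs
        exact absurd hs (by simp)
      · have he : (some t * some y : ReesQuotient I) = ReesQuotient.mk I (t.1 * y.1) := rfl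
        rw [he] at hs
        by_cases h2 : t.1 * y.1 ∈ I.carrier
        · rw [ReesQuotient.mk, dif_pos h2] at hs
          exact absurd hs (by simp)
        · rw [ReesQuotient.mk, dif_neg h2] at hs
          exact Or.inr ⟨t.1, congrArg Subtype.val (Option.some_injective _ hs)⟩
  · rintro (h | ⟨s, hs⟩)
    · exact Or.inl (congrArg some (Subtype.ext h))
    · have hsy : s * y.1 ∉ I.carrier := by rw [← hs]; exact x.2
      refine Or.inr ⟨some ⟨s, fun hm => hsy (I.mul_mem_right y.1 hm)⟩, ?_⟩
      show some x = ReesQuotient.mk I (s * y.1)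
      rw [ReesQuotient.mk, dif_neg hsy]
      exact congrArg some (Subtype.ext hs)

theorem quot_ltL_iff (x y : {a : S // a ∉ I.carrier}) :
    ltL (some x : ReesQuotient I) (some y) ↔ ltL x.1 y.1 := by
  unfold ltL
  rw [quot_leL_iff, quot_leL_iff]

theorem z_mem_I (hI : I.carrier = leftSocle z) : z ∈ I.carrier := by
  rw [hI]; exact Or.inl rfl

theorem not_socle (hI : I.carrier = leftSocle z) {x : S} (hx : x ∉ I.carrier) :
    x ≠ z ∧ ∃ b, ltL b x ∧ b ≠ z := by
  rw [hI] at hx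
  simp only [leftSocle, Set.mem_setOf_eq, not_or, not_forall] at hx
  obtain ⟨h1, b, h2a, h2b⟩ := hx
  exact ⟨h1, b, h2a, h2b⟩

end AuxProof

section ChainAux

theorem chain_of_consec {T : Type u} {lt : T → T → Prop}
    (ht : ∀ {a b c : T}, lt a b → lt b c → lt a c) {m : ℕ} (c : Fin m → T)
    (h : ∀ (i : ℕ) (hi : i + 1 < m), lt (c ⟨i + 1, hi⟩) (c ⟨i, Nat.lt_of_succ_lt hi⟩)) :
    ∀ i j : Fin m, i < j → lt (c j) (c i) := by
  suffices H : ∀ (j : ℕ) (hj : j < m) (i : Fin m), i.1 < j → lt (c ⟨j, hj⟩) (c i) by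
    intro i j hij
    have := H j.1 j.2 i hij
    simpa using this
  intro j
  induction j with
  | zero => intro hj i hi; omega
  | succ n ih =>
    intro hj i hi
    have hn : n < m := Nat.lt_of_succ_lt hj
    rcases Nat.lt_or_ge i.1 n with h1 | h1
    · exact ht (h n hj) (ih hn i h1)
    · have hin : i = ⟨n, hn⟩ := Fin.ext (show i.1 = n by omega)
      rw [hin]
      exact h n hj

theorem zero_mem_chainLengths {T : Type u} (lt : T → T → Prop) : 0 ∈ chainLengths lt :=
  ⟨Fin.elim0, fun i => i.elim0⟩

theorem mem_le_height {T : Type u} {lt : T → T → Prop} {m : ℕ}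
    (h : m ∈ chainLengths lt) : (m : ℕ∞) ≤ heightOf lt :=
  le_iSup₂ (f := fun (k : ℕ) (_ : k ∈ chainLengths lt) => (k : ℕ∞)) m h

theorem height_le {T : Type u} {lt : T → T → Prop} {a : ℕ∞}
    (h : ∀ m ∈ chainLengths lt, (m : ℕ∞) ≤ a) : heightOf lt ≤ a := iSup₂_le h

end ChainAux

section Main

variable {S : Type u} [Semigroup S] {z : S} {I : SemigroupIdeal S}

theorem chain_up (hz : ∀ s : S, z * s = z ∧ s * z = z) (hS : ∃ a : S, a ≠ z)
    (hI : I.carrier = leftSocle z) {m : ℕ}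
    (hm : m ∈ chainLengths (ltL (S := ReesQuotient I))) :
    (m + 1) ∈ chainLengths (ltL (S := S)) := by
  obtain ⟨c, hc⟩ := hm
  by_cases hnone : ∀ i, c i ≠ none
  · -- no zero in the chain: append z at the end
    have hsome : ∀ i, (c i).isSome := fun i => Option.isSome_iff_ne_none.mpr (hnone i)
    set x : Fin m → {a : S // a ∉ I.carrier} := fun i => (c i).get (hsome i) with hx
    have hcx : ∀ i, c i = some (x i) := fun i => (Option.some_get (hsome i)).symm
    refine ⟨fun i => if h : (i : ℕ) < m then (x ⟨i, h⟩).1 else z, ?_⟩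
    refine chain_of_consec (lt := ltL (S := S)) (fun hab hbc => ltL_trans' hab hbc) _ ?_
    intro i hi
    by_cases h2 : i + 1 < m
    · have h1 : i < m := Nat.lt_of_succ_lt h2
      simp only [dif_pos h2, dif_pos h1]
      have := hc ⟨i, h1⟩ ⟨i + 1, h2⟩ (Fin.mk_lt_mk.mpr (by omega))
      rw [hcx, hcx] at this
      exact (quot_ltL_iff _ _).mp this
    · have h1 : i < m := by omega
      simp only [dif_neg h2, dif_pos h1]
      refine ltL_z' hz (fun hxz => ?_)
      exact (x ⟨i, h1⟩).2 (hxz ▸ z_mem_I hI)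
  · -- the chain contains the zero, necessarily at the last position
    push_neg at hnone
    obtain ⟨i0, hi0⟩ := hnone
    have hlast : (i0 : ℕ) = m - 1 := by
      by_contra hne
      have h2 : (i0 : ℕ) + 1 < m := by omega
      have := hc i0 ⟨(i0 : ℕ) + 1, h2⟩ (Fin.lt_def.mpr (Nat.lt_succ_self _))
      rw [hi0] at this
      exact this.2 (none_leL' _)
    have hm1 : m = (i0 : ℕ) + 1 := by omega
    have hother : ∀ j : Fin m, (j : ℕ) < (i0 : ℕ) → (c j).isSome := by
      intro j hj
      rw [Option.isSome_iff_ne_none]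
      intro hj0
      have := hc j i0 (Fin.lt_def.mpr hj)
      rw [hi0, hj0] at this
      exact this.2 (none_leL' _)
    rcases Nat.eq_zero_or_pos (i0 : ℕ) with hk0 | hkpos
    · -- m = 1 : chain is just [0']; use [a, z] with a ≠ z
      obtain ⟨a, ha⟩ := hS
      refine ⟨fun i => if (i : ℕ) = 0 then a else z, ?_⟩
      refine chain_of_consec (lt := ltL (S := S)) (fun hab hbc => ltL_trans' hab hbc) _ ?_
      intro i hi
      have hi1 : i = 0 := by omega
      subst hi1
      show ltL (if (0 + 1 : ℕ) = 0 then a else z) (if (0 : ℕ) = 0 then a else z)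
      rw [if_neg (by omega), if_pos rfl]
      exact ltL_z' hz ha
    · -- m ≥ 2 : chain x_0 > ... > x_{k-1} > b > z where k = i0
      set k : ℕ := (i0 : ℕ) with hk
      have hkm : k < m := i0.2
      have hlastsome : (c ⟨k - 1, by omega⟩).isSome := hother _ (by simpa using by omega)
      set xlast : {a : S // a ∉ I.carrier} := (c ⟨k - 1, by omega⟩).get hlastsome with hxl
      obtain ⟨-, b, hbx, hbz⟩ := not_socle hI xlast.2
      refine ⟨fun i => if h : (i : ℕ) < k then ((c ⟨i, by omega⟩).get (hother _ h)).1
        else if (i : ℕ) = k then b else z, ?_⟩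
      refine chain_of_consec (lt := ltL (S := S)) (fun hab hbc => ltL_trans' hab hbc) _ ?_
      intro i hi
      by_cases h2 : i + 1 < k
      · have h1 : i < k := Nat.lt_of_succ_lt h2
        simp only [dif_pos h2, dif_pos h1]
        have := hc ⟨i, by omega⟩ ⟨i + 1, by omega⟩ (Fin.mk_lt_mk.mpr (by omega))
        rw [(Option.some_get (hother ⟨i, by omega⟩ h1)).symm,
          (Option.some_get (hother ⟨i + 1, by omega⟩ h2)).symm] at this
        exact (quot_ltL_iff _ _).mp this
      · by_cases h3 : i + 1 = k
        · have h1 : i < k := by omega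
          simp only [dif_neg h2, dif_pos h1, if_pos h3]
          have hieq : i = k - 1 := by omega
          subst hieq
          exact hbx
        · -- i + 1 > k, so i ≥ k; since i+1 < m = k+1, impossible unless i = k
          have hik : i = k := by omega
          subst hik
          simp only [dif_neg h2, dif_neg (by omega : ¬ (k < k)),
            if_pos rfl, if_neg (by omega : ¬ (k + 1 = k))]
          exact ltL_z' hz hbz

theorem not_mem_of_chain (hz : ∀ s : S, z * s = z ∧ s * z = z)
    (hI : I.carrier = leftSocle z) {n : ℕ} (a : Fin n → S)
    (hc : ∀ i j : Fin n, i < j → ltL (a j) (a i)) {i : ℕ} (hi : i + 2 < n) :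
    a ⟨i, by omega⟩ ∉ I.carrier := by
  intro hmem
  rw [hI] at hmem
  have h1 := hc ⟨i, by omega⟩ ⟨i + 1, by omega⟩ (Fin.mk_lt_mk.mpr (by omega))
  have h2 := hc ⟨i + 1, by omega⟩ ⟨i + 2, by omega⟩ (Fin.mk_lt_mk.mpr (by omega))
  rcases hmem with hmz | hmin
  · rw [hmz] at h1
    have := eq_z_of_leL' hz h1.1
    exact h1.2 (this ▸ leL_z' hz _)
  · have ha1 : a ⟨i + 1, by omega⟩ = z := hmin _ h1
    rw [ha1] at h2
    have := eq_z_of_leL' hz h2.1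
    exact h2.2 (this ▸ leL_z' hz _)

theorem chain_down (hz : ∀ s : S, z * s = z ∧ s * z = z)
    (hI : I.carrier = leftSocle z) {m : ℕ}
    (hm : (m + 1) ∈ chainLengths (ltL (S := S))) :
    m ∈ chainLengths (ltL (S := ReesQuotient I)) := by
  obtain ⟨a, hc⟩ := hm
  refine ⟨fun i => if h : (i : ℕ) + 1 < m then
      some ⟨a ⟨(i : ℕ), by omega⟩, not_mem_of_chain hz hI a hc (by omega)⟩ else none, ?_⟩
  refine chain_of_consec (lt := ltL (S := ReesQuotient I)) (fun hab hbc => ltL_trans' hab hbc) _ ?_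
  intro i hi
  by_cases h2 : i + 1 + 1 < m
  · have h1 : i + 1 < m := Nat.lt_of_succ_lt h2
    simp only [dif_pos h2, dif_pos h1]
    rw [quot_ltL_iff]
    exact hc ⟨i, by omega⟩ ⟨i + 1, by omega⟩ (Fin.mk_lt_mk.mpr (by omega))
  · have h1 : i + 1 < m := hi
    simp only [dif_neg h2, dif_pos h1]
    exact ltL_none' (by simp)

end Main

/-- For a semigroup `S` with zero `z` and `S ≠ {z}`, and `I` the left
socle of `S`: `H_L(S)` is finite iff `H_L(S/I)` is finite, in which case
`H_L(S) = H_L(S/I) + 1`. -/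
theorem L_height_and_left_socle (S : Type u) [Semigroup S] (z : S)
    (hz : ∀ s : S, z * s = z ∧ s * z = z)
    (hS : ∃ a : S, a ≠ z)
    (I : SemigroupIdeal S) (hI : I.carrier = leftSocle z) :
    (HL S < ⊤ ↔ HL (ReesQuotient I) < ⊤) ∧
    (HL S < ⊤ → HL S = HL (ReesQuotient I) + 1) := by
  have hup := fun {m} hm => chain_up (z := z) (I := I) hz hS hI (m := m) hm
  have hdown := fun {m} hm => chain_down (z := z) (I := I) hz hI (m := m) hm
  have h1 : HL (ReesQuotient I) ≤ HL S := by
    refine height_le fun m hm => ?_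
    refine le_trans ?_ (mem_le_height (hup hm))
    exact_mod_cast Nat.le_succ m
  have h2 : HL S ≤ HL (ReesQuotient I) + 1 := by
    refine height_le fun m hm => ?_
    cases m with
    | zero => simp
    | succ k =>
      have hk := mem_le_height (hdown hm)
      calc ((k + 1 : ℕ) : ℕ∞) = (k : ℕ∞) + 1 := by push_cast; ring
        _ ≤ HL (ReesQuotient I) + 1 := add_le_add_left hk 1
  have h3 : HL (ReesQuotient I) + 1 ≤ HL S := by
    have hne : (chainLengths (ltL (S := ReesQuotient I))).Nonempty :=
      ⟨0, zero_mem_chainLengths _⟩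
    rw [HL, heightOf, ENat.biSup_add hne]
    refine iSup₂_le fun m hm => ?_
    have := mem_le_height (hup hm)
    rw [HL]
    exact_mod_cast this
  refine ⟨⟨fun h => lt_of_le_of_lt h1 h, fun h => lt_of_le_of_lt h2 ?_⟩,
    fun _ => le_antisymm h2 h3⟩
  exact ENat.add_lt_top.mpr ⟨h, Ne.lt_top ENat.one_ne_top⟩


end GreenHeights
end
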